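/- arXiv:1605.08249 — 2 statements merged into one kernel-verified Lean document; each statement's English description precedes it below -/
import Mathlib

section
/- Let γ_c = {x₁y₁² + x₂y₂² = 0, y₃ = 0} ⊂ P¹ × P² with coordinates (x₁:x₂) and (y₁:y₂:y₃). An element (A, B) ∈ PGL₂(ℂ) × PGL₃(ℂ), acting by (x, y) ↦ (Ax, By), preserves γ_c if and only if it is represented by matrices of the form (i) A = [[a₁²,0],[0,1]], B = [[1,0,b₁],[0,a₁,b₂],[0,0,a₂]], or (ii) A = [[0,a₁²],[1,0]], B = [[0,1,b₁],[a₁,0,b₂],[0,0,a₂]], where a₁, a₂ ∈ ℂ* and b₁, b₂ ∈ ℂ. Moreover, the orbit of the point ((1:1), (0:0:1)) under the group G of all such elements is the open set {((x₁:x₂),(y₁:y₂:y₃)) : x₁x₂ ≠ 0 and y₃ ≠ 0}; in particular the action of G on P¹ × P² is quasi-homogeneous. -/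
/-!
Statement 6: the subgroup of `PGL₂(ℂ) × PGL₃(ℂ)` preserving
`γ_c = {x₁y₁² + x₂y₂² = 0, y₃ = 0} ⊂ ℙ¹ × ℙ²` consists exactly of the elements
represented by the matrices (i) or (ii) below, and the orbit of `((1:1),(0:0:1))` under
this group `G` is the open set `{x₁x₂ ≠ 0, y₃ ≠ 0}`; in particular the `G`-action on
`ℙ¹ × ℙ²` is quasi-homogeneous (it has a dense open orbit).

We work with `GL` matrices acting on the projectivizations; an element of `PGL` is
"represented by" a matrix iff any `GL`-lift of it is a nonzero scalar multiple of that
matrix.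
-/

noncomputable section
open scoped Matrix

/-- The complex projective line. -/
abbrev P1C : Type := Projectivization ℂ (Fin 2 → ℂ)

/-- The complex projective plane. -/
abbrev P2C : Type := Projectivization ℂ (Fin 3 → ℂ)

/-- The action of an invertible matrix on projective space. -/
def matAct {n : ℕ} (A : GL (Fin n) ℂ) :
    Projectivization ℂ (Fin n → ℂ) → Projectivization ℂ (Fin n → ℂ) :=
  Projectivization.map ((A : Matrix (Fin n) (Fin n) ℂ).mulVecLin) (by
    intro x y h
    have h2 := congrArg (fun v => (↑(A⁻¹) : Matrix (Fin n) (Fin n) ℂ) *ᵥ v) h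
    simp only [Matrix.mulVecLin_apply, Matrix.mulVec_mulVec] at h2
    rw [A.inv_mul] at h2
    simpa using h2)

/-- The action of a pair of invertible matrices on `ℙ¹ × ℙ²`,
`(x, y) ↦ (Ax, By)`. -/
def pairAct (A : GL (Fin 2) ℂ) (B : GL (Fin 3) ℂ) : P1C × P2C → P1C × P2C :=
  fun z => (matAct A z.1, matAct B z.2)

/-- The curve `γ_c = {x₁ y₁² + x₂ y₂² = 0, y₃ = 0} ⊂ ℙ¹ × ℙ²`.  (The defining
conditions are scaling-invariant, hence well defined on representatives.) -/
def gammaC : Set (P1C × P2C) :=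
  {z | z.1.rep 0 * (z.2.rep 0) ^ 2 + z.1.rep 1 * (z.2.rep 1) ^ 2 = 0 ∧ z.2.rep 2 = 0}

/-- The base point `((1:1), (0:0:1)) ∈ ℙ¹ × ℙ²`. -/
def basePt : P1C × P2C :=
  (Projectivization.mk ℂ ![1, 1] (by intro h; simpa using congrFun h 0),
   Projectivization.mk ℂ ![0, 0, 1] (by intro h; simpa using congrFun h 2))

/-! ### Auxiliary lemmas -/

lemma mulVec_ne_zero {n : ℕ} (A : GL (Fin n) ℂ) {v : Fin n → ℂ} (hv : v ≠ 0) :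
    (A : Matrix (Fin n) (Fin n) ℂ) *ᵥ v ≠ 0 := by
  intro h
  apply hv
  have h2 := congrArg (fun w => (↑(A⁻¹) : Matrix (Fin n) (Fin n) ℂ) *ᵥ w) h
  simp only [Matrix.mulVec_mulVec, Matrix.mulVec_zero] at h2
  rw [A.inv_mul] at h2
  simpa using h2

lemma matAct_mk {n : ℕ} (A : GL (Fin n) ℂ) (v : Fin n → ℂ) (hv : v ≠ 0) :
    matAct A (Projectivization.mk ℂ v hv) =
      Projectivization.mk ℂ ((A : Matrix (Fin n) (Fin n) ℂ) *ᵥ v) (mulVec_ne_zero A hv) := by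
  rfl

lemma matAct_inv_cancel {n : ℕ} (A : GL (Fin n) ℂ) (u : Projectivization ℂ (Fin n → ℂ)) :
    matAct A (matAct A⁻¹ u) = u := by
  induction u using Projectivization.ind with | h v hv =>
  rw [matAct_mk, matAct_mk, Projectivization.mk_eq_mk_iff']
  refine ⟨1, ?_⟩
  simp [Matrix.mulVec_mulVec, ← Matrix.coe_units_inv]

lemma mem_gammaC_mk {v : Fin 2 → ℂ} {w : Fin 3 → ℂ} (hv : v ≠ 0) (hw : w ≠ 0) :
    (Projectivization.mk ℂ v hv, Projectivization.mk ℂ w hw) ∈ gammaC ↔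
      (v 0 * w 0 ^ 2 + v 1 * w 1 ^ 2 = 0 ∧ w 2 = 0) := by
  obtain ⟨a, ha⟩ := Projectivization.exists_smul_eq_mk_rep ℂ v hv
  obtain ⟨b, hb⟩ := Projectivization.exists_smul_eq_mk_rep ℂ w hw
  have ha0 : ∀ i, (Projectivization.mk ℂ v hv).rep i = (a : ℂ) * v i := by
    intro i; rw [← ha]; rfl
  have hb0 : ∀ i, (Projectivization.mk ℂ w hw).rep i = (b : ℂ) * w i := by
    intro i; rw [← hb]; rfl
  simp only [gammaC, Set.mem_setOf_eq, ha0, hb0]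
  constructor
  · rintro ⟨h1, h2⟩
    have hab : ((a:ℂ) * ((b:ℂ))^2) ≠ 0 :=
      mul_ne_zero a.ne_zero (pow_ne_zero _ b.ne_zero)
    refine ⟨?_, ?_⟩
    · have h3 : ((a:ℂ) * ((b:ℂ))^2) * (v 0 * w 0 ^ 2 + v 1 * w 1 ^ 2) = 0 := by
        linear_combination h1
      exact (mul_eq_zero.1 h3).resolve_left hab
    · exact (mul_eq_zero.1 h2).resolve_left b.ne_zero
  · rintro ⟨h1, h2⟩
    exact ⟨by linear_combination ((a:ℂ) * (b:ℂ)^2) * h1, by rw [h2, mul_zero]⟩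

lemma rep_scal {n : ℕ} {v : Fin n → ℂ} (hv : v ≠ 0) :
    ∃ a : ℂ, a ≠ 0 ∧ ∀ i, (Projectivization.mk ℂ v hv).rep i = a * v i := by
  obtain ⟨a, ha⟩ := Projectivization.exists_smul_eq_mk_rep ℂ v hv
  exact ⟨a, a.ne_zero, fun i => by rw [← ha]; rfl⟩

lemma rep01_ne_zero_iff {v : Fin 2 → ℂ} (hv : v ≠ 0) :
    (Projectivization.mk ℂ v hv).rep 0 * (Projectivization.mk ℂ v hv).rep 1 ≠ 0 ↔
      v 0 * v 1 ≠ 0 := by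
  obtain ⟨a, ha, h⟩ := rep_scal hv
  rw [h 0, h 1]
  constructor
  · intro h0 h1; exact h0 (by rw [show (a*v 0)*(a*v 1) = a^2*(v 0*v 1) by ring, h1, mul_zero])
  · intro h0 h1
    exact h0 (by
      have : a^2 * (v 0 * v 1) = 0 := by linear_combination h1
      exact ((mul_eq_zero.1 this).resolve_left (pow_ne_zero _ ha)))

lemma rep2_ne_zero_iff {w : Fin 3 → ℂ} (hw : w ≠ 0) :
    (Projectivization.mk ℂ w hw).rep 2 ≠ 0 ↔ w 2 ≠ 0 := by
  obtain ⟨a, ha, h⟩ := rep_scal hw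
  rw [h 2]
  simp [mul_eq_zero, ha]

def glOf {n : ℕ} (M : Matrix (Fin n) (Fin n) ℂ) (h : M.det ≠ 0) : GL (Fin n) ℂ :=
  ⟨M, M⁻¹, Matrix.mul_nonsing_inv M (isUnit_iff_ne_zero.2 h),
    Matrix.nonsing_inv_mul M (isUnit_iff_ne_zero.2 h)⟩

@[simp] lemma glOf_coe {n : ℕ} (M : Matrix (Fin n) (Fin n) ℂ) (h : M.det ≠ 0) :
    ((glOf M h : GL (Fin n) ℂ) : Matrix (Fin n) (Fin n) ℂ) = M := rfl

lemma GL_det_ne_zero {n : ℕ} (A : GL (Fin n) ℂ) :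
    ((A : Matrix (Fin n) (Fin n) ℂ)).det ≠ 0 :=
  ((Matrix.isUnit_iff_isUnit_det _).1 A.isUnit).ne_zero

lemma GL_inv_coe {n : ℕ} (A : GL (Fin n) ℂ) {N : Matrix (Fin n) (Fin n) ℂ}
    (h : (A : Matrix (Fin n) (Fin n) ℂ) * N = 1) :
    ((A⁻¹ : GL (Fin n) ℂ) : Matrix (Fin n) (Fin n) ℂ) = N := by
  rw [Matrix.coe_units_inv, Matrix.inv_eq_right_inv h]

lemma mulVec2 (M : Matrix (Fin 2) (Fin 2) ℂ) (v : Fin 2 → ℂ) (i : Fin 2) :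
    (M *ᵥ v) i = M i 0 * v 0 + M i 1 * v 1 := by
  simp [Matrix.mulVec, dotProduct, Fin.sum_univ_two]

lemma mulVec3 (M : Matrix (Fin 3) (Fin 3) ℂ) (v : Fin 3 → ℂ) (i : Fin 3) :
    (M *ᵥ v) i = M i 0 * v 0 + M i 1 * v 1 + M i 2 * v 2 := by
  simp [Matrix.mulVec, dotProduct, Fin.sum_univ_three]

/-- The characterization predicate: `(A, B)` is represented by matrices of type (i)
or type (ii). -/
def IsGood (A : GL (Fin 2) ℂ) (B : GL (Fin 3) ℂ) : Prop :=
  ∃ (a₁ a₂ b₁ b₂ c d : ℂ), a₁ ≠ 0 ∧ a₂ ≠ 0 ∧ c ≠ 0 ∧ d ≠ 0 ∧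
    (((A : Matrix (Fin 2) (Fin 2) ℂ) = c • !![a₁ ^ 2, 0; 0, 1] ∧
      (B : Matrix (Fin 3) (Fin 3) ℂ) = d • !![1, 0, b₁; 0, a₁, b₂; 0, 0, a₂]) ∨
     ((A : Matrix (Fin 2) (Fin 2) ℂ) = c • !![0, a₁ ^ 2; 1, 0] ∧
      (B : Matrix (Fin 3) (Fin 3) ℂ) = d • !![0, 1, b₁; a₁, 0, b₂; 0, 0, a₂]))

lemma good_mapsTo {A : GL (Fin 2) ℂ} {B : GL (Fin 3) ℂ} (h : IsGood A B) :
    ∀ z ∈ gammaC, pairAct A B z ∈ gammaC := by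
  obtain ⟨a₁, a₂, b₁, b₂, c, d, ha₁, ha₂, hc, hd, hAB⟩ := h
  rintro ⟨z1, z2⟩ hz
  induction z1 using Projectivization.ind with | h v hv =>
  induction z2 using Projectivization.ind with | h w hw =>
  rw [mem_gammaC_mk hv hw] at hz
  obtain ⟨h1, h2⟩ := hz
  show (matAct A _, matAct B _) ∈ gammaC
  rw [matAct_mk, matAct_mk, mem_gammaC_mk]
  rcases hAB with ⟨hA, hB⟩ | ⟨hA, hB⟩ <;>
    rw [hA, hB] <;>
    simp [mulVec2, mulVec3, Matrix.vecHead, Matrix.vecTail, h2] <;>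
    linear_combination (c*d^2*a₁^2) * h1

lemma good_inv {A : GL (Fin 2) ℂ} {B : GL (Fin 3) ℂ} (h : IsGood A B) : IsGood A⁻¹ B⁻¹ := by
  obtain ⟨a₁, a₂, b₁, b₂, c, d, ha₁, ha₂, hc, hd, hAB⟩ := h
  rcases hAB with ⟨hA, hB⟩ | ⟨hA, hB⟩
  · refine ⟨a₁⁻¹, a₂⁻¹, -b₁/a₂, -b₂/(a₁*a₂), c⁻¹, d⁻¹, inv_ne_zero ha₁, inv_ne_zero ha₂,
      inv_ne_zero hc, inv_ne_zero hd, Or.inl ⟨?_, ?_⟩⟩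
    · refine GL_inv_coe A ?_
      rw [hA]; ext i j
      fin_cases i <;> fin_cases j <;>
        simp [Matrix.mul_apply, Fin.sum_univ_two, Matrix.vecHead, Matrix.vecTail] <;>
        field_simp
    · refine GL_inv_coe B ?_
      rw [hB]; ext i j
      fin_cases i <;> fin_cases j <;>
        simp [Matrix.mul_apply, Fin.sum_univ_three, Matrix.vecHead, Matrix.vecTail] <;>
        field_simp <;> ring
  · refine ⟨a₁, a₁/a₂, -b₂/a₂, -(a₁*b₁)/a₂, c⁻¹*(a₁^2)⁻¹, d⁻¹*a₁⁻¹, ha₁,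
      div_ne_zero ha₁ ha₂, mul_ne_zero (inv_ne_zero hc) (inv_ne_zero (pow_ne_zero _ ha₁)),
      mul_ne_zero (inv_ne_zero hd) (inv_ne_zero ha₁), Or.inr ⟨?_, ?_⟩⟩
    · refine GL_inv_coe A ?_
      rw [hA]; ext i j
      fin_cases i <;> fin_cases j <;>
        simp [Matrix.mul_apply, Fin.sum_univ_two, Matrix.vecHead, Matrix.vecTail] <;>
        field_simp <;> ring
    · refine GL_inv_coe B ?_
      rw [hB]; ext i j
      fin_cases i <;> fin_cases j <;>
        simp [Matrix.mul_apply, Fin.sum_univ_three, Matrix.vecHead, Matrix.vecTail] <;>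
        field_simp <;> ring

lemma good_image_eq {A : GL (Fin 2) ℂ} {B : GL (Fin 3) ℂ} (h : IsGood A B) :
    pairAct A B '' gammaC = gammaC := by
  apply Set.Subset.antisymm
  · rintro _ ⟨z, hz, rfl⟩
    exact good_mapsTo h z hz
  · intro z hz
    refine ⟨pairAct A⁻¹ B⁻¹ z, good_mapsTo (good_inv h) z hz, ?_⟩
    show (matAct A (matAct A⁻¹ z.1), matAct B (matAct B⁻¹ z.2)) = z
    rw [matAct_inv_cancel, matAct_inv_cancel]

lemma key_alg (p q r s α β γ δ : ℂ)
    (hdetA : p*s - q*r ≠ 0) (hΔ : α*δ - β*γ ≠ 0)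
    (e0 : (p - q*0^2)*(α*0+β)^2 + (r - s*0^2)*(γ*0+δ)^2 = 0)
    (e1 : (p - q*1^2)*(α*1+β)^2 + (r - s*1^2)*(γ*1+δ)^2 = 0)
    (em1 : (p - q*(-1)^2)*(α*(-1)+β)^2 + (r - s*(-1)^2)*(γ*(-1)+δ)^2 = 0)
    (e2 : (p - q*2^2)*(α*2+β)^2 + (r - s*2^2)*(γ*2+δ)^2 = 0)
    (einf : q*α^2 + s*γ^2 = 0) :
    (β = 0 ∧ γ = 0 ∧ q = 0 ∧ r = 0 ∧ p*α^2 = s*δ^2 ∧ α ≠ 0 ∧ δ ≠ 0 ∧ p ≠ 0 ∧ s ≠ 0) ∨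
    (α = 0 ∧ δ = 0 ∧ p = 0 ∧ s = 0 ∧ q*β^2 = r*γ^2 ∧ β ≠ 0 ∧ γ ≠ 0 ∧ q ≠ 0 ∧ r ≠ 0) := by
  have hc0 : p*β^2 + r*δ^2 = 0 := by linear_combination e0
  have hc1 : p*α*β + r*γ*δ = 0 := by
    linear_combination (-1/4)*e0 + (1/2)*e1 + (-1/6)*em1 + (-1/12)*e2 + (-1)*einf
  have hc2 : p*α^2 - q*β^2 + r*γ^2 - s*δ^2 = 0 := by
    linear_combination (-1)*e0 + (1/2)*e1 + (1/2)*em1 + einf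
  have hc3 : q*α*β + s*γ*δ = 0 := by
    linear_combination (-1/4)*e0 + (1/4)*e1 + (1/12)*em1 + (-1/12)*e2 + (-1)*einf
  have hpb : p*β*(α*δ - β*γ) = 0 := by linear_combination δ*hc1 - γ*hc0
  have hrd : r*δ*(α*δ - β*γ) = 0 := by linear_combination α*hc0 - β*hc1
  have hqa : q*α*(α*δ - β*γ) = 0 := by linear_combination δ*einf - γ*hc3
  have hsg : s*γ*(α*δ - β*γ) = 0 := by linear_combination α*hc3 - β*einf
  have hpb0 : p*β = 0 := by
    rcases mul_eq_zero.1 hpb with h | h; exact h; exact absurd h hΔ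
  have hrd0 : r*δ = 0 := by
    rcases mul_eq_zero.1 hrd with h | h; exact h; exact absurd h hΔ
  have hqa0 : q*α = 0 := by
    rcases mul_eq_zero.1 hqa with h | h; exact h; exact absurd h hΔ
  have hsg0 : s*γ = 0 := by
    rcases mul_eq_zero.1 hsg with h | h; exact h; exact absurd h hΔ
  by_cases hβ : β = 0
  · left
    have hαδ : α ≠ 0 ∧ δ ≠ 0 := by
      constructor <;> intro h <;> apply hΔ <;> rw [hβ, h] <;> ring
    have hq : q = 0 := by
      rcases mul_eq_zero.1 hqa0 with h | h; exact h; exact absurd h hαδ.1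
    have hr : r = 0 := by
      rcases mul_eq_zero.1 hrd0 with h | h; exact h; exact absurd h hαδ.2
    have hps : p ≠ 0 ∧ s ≠ 0 := by
      constructor <;> intro h <;> apply hdetA <;> rw [hq, hr, h] <;> ring
    have hγ : γ = 0 := by
      rcases mul_eq_zero.1 hsg0 with h | h; exact absurd h hps.2; exact h
    exact ⟨hβ, hγ, hq, hr, by linear_combination hc2 + β^2*hq - γ^2*hr, hαδ.1, hαδ.2, hps.1, hps.2⟩
  · right
    have hp : p = 0 := by
      rcases mul_eq_zero.1 hpb0 with h | h; exact h; exact absurd h hβ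
    have hqr : q ≠ 0 ∧ r ≠ 0 := by
      constructor <;> intro h <;> apply hdetA <;> rw [hp, h] <;> ring
    have hα : α = 0 := by
      rcases mul_eq_zero.1 hqa0 with h | h; exact absurd h hqr.1; exact h
    have hγ : γ ≠ 0 := by
      intro h; apply hΔ; rw [hα, h]; ring
    have hs : s = 0 := by
      rcases mul_eq_zero.1 hsg0 with h | h; exact h; exact absurd h hγ
    have hδ : δ = 0 := by
      rcases mul_eq_zero.1 hrd0 with h | h; exact absurd h hqr.2; exact h
    exact ⟨hα, hδ, hp, hs, by linear_combination -hc2 + α^2*hp - δ^2*hs, hβ, hγ, hqr.1, hqr.2⟩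

lemma image_eq_isGood {A : GL (Fin 2) ℂ} {B : GL (Fin 3) ℂ}
    (himg : pairAct A B '' gammaC = gammaC) : IsGood A B := by
  set M : Matrix (Fin 2) (Fin 2) ℂ := (A : Matrix (Fin 2) (Fin 2) ℂ) with hM
  set N : Matrix (Fin 3) (Fin 3) ℂ := (B : Matrix (Fin 3) (Fin 3) ℂ) with hN
  have hmem : ∀ (v : Fin 2 → ℂ) (w : Fin 3 → ℂ) (hv : v ≠ 0) (hw : w ≠ 0),
      (Projectivization.mk ℂ v hv, Projectivization.mk ℂ w hw) ∈ gammaC →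
      ((M *ᵥ v) 0 * ((N *ᵥ w) 0)^2 + (M *ᵥ v) 1 * ((N *ᵥ w) 1)^2 = 0 ∧ (N *ᵥ w) 2 = 0) := by
    intro v w hv hw hz
    have h2 : pairAct A B (Projectivization.mk ℂ v hv, Projectivization.mk ℂ w hw) ∈ gammaC :=
      himg ▸ Set.mem_image_of_mem _ hz
    rwa [show pairAct A B (Projectivization.mk ℂ v hv, Projectivization.mk ℂ w hw) =
      (matAct A (Projectivization.mk ℂ v hv), matAct B (Projectivization.mk ℂ w hw)) from rfl,
      matAct_mk, matAct_mk, mem_gammaC_mk] at h2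
  have hpt : ∀ t : ℂ,
      ((M 0 0 - M 0 1*t^2)*(N 0 0*t + N 0 1)^2 + (M 1 0 - M 1 1*t^2)*(N 1 0*t + N 1 1)^2 = 0
        ∧ N 2 0*t + N 2 1 = 0) := by
    intro t
    have hv : (![1, -t^2] : Fin 2 → ℂ) ≠ 0 := fun h => by simpa using congrFun h 0
    have hw : (![t, 1, 0] : Fin 3 → ℂ) ≠ 0 := fun h => by simpa using congrFun h 1
    have hz : (Projectivization.mk ℂ ![1, -t^2] hv, Projectivization.mk ℂ ![t, 1, 0] hw)
        ∈ gammaC := by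
      rw [mem_gammaC_mk]
      constructor
      · simp [Matrix.vecHead, Matrix.vecTail]
      · simp
    have h2 := hmem _ _ hv hw hz
    rw [mulVec2, mulVec2, mulVec3, mulVec3, mulVec3] at h2
    simp only [Matrix.cons_val_zero, Matrix.cons_val_one, Matrix.head_cons, Matrix.cons_val_two,
      Matrix.tail_cons] at h2
    constructor
    · linear_combination h2.1
    · linear_combination h2.2
  have hinf : M 0 1 * (N 0 0)^2 + M 1 1 * (N 1 0)^2 = 0 := by
    have hv : (![0, 1] : Fin 2 → ℂ) ≠ 0 := fun h => by simpa using congrFun h 1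
    have hw : (![1, 0, 0] : Fin 3 → ℂ) ≠ 0 := fun h => by simpa using congrFun h 0
    have hz : (Projectivization.mk ℂ ![0, 1] hv, Projectivization.mk ℂ ![1, 0, 0] hw)
        ∈ gammaC := (mem_gammaC_mk hv hw).mpr (by norm_num; rfl)
    have h2 := (hmem _ _ hv hw hz).1
    rw [mulVec2, mulVec2, mulVec3, mulVec3] at h2
    simp only [Matrix.cons_val_zero, Matrix.cons_val_one, Matrix.head_cons, Matrix.cons_val_two,
      Matrix.tail_cons, Matrix.vecHead, Matrix.vecTail, Function.comp, Fin.succ_zero_eq_one] at h2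
    linear_combination h2
  have hN21 : N 2 1 = 0 := by
    have := (hpt 0).2; linear_combination this
  have hN20 : N 2 0 = 0 := by
    have := (hpt 1).2; linear_combination this - hN21
  have hdA : M 0 0 * M 1 1 - M 0 1 * M 1 0 ≠ 0 := by
    have := GL_det_ne_zero A; rwa [← hM, Matrix.det_fin_two] at this
  have hdB0 := GL_det_ne_zero B
  rw [← hN, Matrix.det_fin_three] at hdB0
  have hfact : (N 0 0 * N 1 1 - N 0 1 * N 1 0) * N 2 2 ≠ 0 := by
    intro h
    apply hdB0
    linear_combination h + (N 0 1*N 1 2 - N 0 2*N 1 1)*hN20 + (N 0 2*N 1 0 - N 0 0*N 1 2)*hN21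
  have hΔ : N 0 0 * N 1 1 - N 0 1 * N 1 0 ≠ 0 := fun h => hfact (by rw [h, zero_mul])
  have hN22 : N 2 2 ≠ 0 := fun h => hfact (by rw [h, mul_zero])
  have hkey := key_alg (M 0 0) (M 0 1) (M 1 0) (M 1 1) (N 0 0) (N 0 1) (N 1 0) (N 1 1)
    hdA hΔ (by linear_combination (hpt 0).1) (by linear_combination (hpt 1).1)
    (by linear_combination (hpt (-1)).1) (by linear_combination (hpt 2).1)
    (by linear_combination hinf)
  rcases hkey with ⟨hβ, hγ, hq, hr, hps, hα, hδ, hp, hs⟩ | ⟨hα, hδ, hp, hs, hqr, hβ, hγ, hq, hr⟩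
  · refine ⟨N 1 1 / N 0 0, N 2 2 / N 0 0, N 0 2 / N 0 0, N 1 2 / N 0 0, M 1 1, N 0 0,
      div_ne_zero hδ hα, div_ne_zero hN22 hα, hs, hα, Or.inl ⟨?_, ?_⟩⟩
    · rw [← hM]; ext i j
      fin_cases i <;> fin_cases j <;>
        simp [Matrix.vecHead, Matrix.vecTail, hq, hr] <;>
        field_simp <;> linear_combination hps
    · rw [← hN]; ext i j
      fin_cases i <;> fin_cases j <;>
        simp [Matrix.vecHead, Matrix.vecTail, hβ, hγ, hN20, hN21] <;>
        field_simp
  · refine ⟨N 1 0 / N 0 1, N 2 2 / N 0 1, N 0 2 / N 0 1, N 1 2 / N 0 1, M 1 0, N 0 1,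
      div_ne_zero hγ hβ, div_ne_zero hN22 hβ, hr, hβ, Or.inr ⟨?_, ?_⟩⟩
    · rw [← hM]; ext i j
      fin_cases i <;> fin_cases j <;>
        simp [Matrix.vecHead, Matrix.vecTail, hp, hs] <;>
        field_simp <;> linear_combination hqr
    · rw [← hN]; ext i j
      fin_cases i <;> fin_cases j <;>
        simp [Matrix.vecHead, Matrix.vecTail, hα, hδ, hN20, hN21] <;>
        field_simp

/-- An element `(A, B) ∈ PGL₂(ℂ) × PGL₃(ℂ)` preserves `γ_c` iff it is
represented by matrices of the form (i)
`A = [[a₁²,0],[0,1]], B = [[1,0,b₁],[0,a₁,b₂],[0,0,a₂]]` or (ii)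
`A = [[0,a₁²],[1,0]], B = [[0,1,b₁],[a₁,0,b₂],[0,0,a₂]]` with `a₁, a₂ ∈ ℂ*`,
`b₁, b₂ ∈ ℂ`; moreover the orbit of `((1:1),(0:0:1))` under the group `G` of all such
elements is the open set `{x₁x₂ ≠ 0, y₃ ≠ 0}`, so the action of `G` on `ℙ¹ × ℙ²` is
quasi-homogeneous. -/
theorem preserving_gammaC_characterization_and_open_orbit :
    (∀ (A : GL (Fin 2) ℂ) (B : GL (Fin 3) ℂ),
      pairAct A B '' gammaC = gammaC ↔
        ∃ (a₁ a₂ b₁ b₂ c d : ℂ), a₁ ≠ 0 ∧ a₂ ≠ 0 ∧ c ≠ 0 ∧ d ≠ 0 ∧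
          (((A : Matrix (Fin 2) (Fin 2) ℂ) = c • !![a₁ ^ 2, 0; 0, 1] ∧
            (B : Matrix (Fin 3) (Fin 3) ℂ) = d • !![1, 0, b₁; 0, a₁, b₂; 0, 0, a₂]) ∨
           ((A : Matrix (Fin 2) (Fin 2) ℂ) = c • !![0, a₁ ^ 2; 1, 0] ∧
            (B : Matrix (Fin 3) (Fin 3) ℂ) = d • !![0, 1, b₁; a₁, 0, b₂; 0, 0, a₂]))) ∧
    {z : P1C × P2C | ∃ (A : GL (Fin 2) ℂ) (B : GL (Fin 3) ℂ),
        pairAct A B '' gammaC = gammaC ∧ pairAct A B basePt = z} =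
      {z : P1C × P2C | z.1.rep 0 * z.1.rep 1 ≠ 0 ∧ z.2.rep 2 ≠ 0} := by
  constructor
  · intro A B
    exact ⟨fun h => image_eq_isGood h, fun h => good_image_eq h⟩
  · ext z
    simp only [Set.mem_setOf_eq]
    constructor
    · rintro ⟨A, B, himg, rfl⟩
      obtain ⟨a₁, a₂, b₁, b₂, c, d, ha₁, ha₂, hc, hd, hAB⟩ := image_eq_isGood himg
      show (matAct A (Projectivization.mk ℂ ![1,1] _)).rep 0 *
           (matAct A (Projectivization.mk ℂ ![1,1] _)).rep 1 ≠ 0 ∧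
           (matAct B (Projectivization.mk ℂ ![0,0,1] _)).rep 2 ≠ 0
      rw [matAct_mk, matAct_mk, rep01_ne_zero_iff, rep2_ne_zero_iff]
      rcases hAB with ⟨hA, hB⟩ | ⟨hA, hB⟩ <;>
        rw [hA, hB] <;>
        simp [mulVec2, mulVec3, Matrix.vecHead, Matrix.vecTail, mul_eq_zero,
          hc, hd, ha₁, ha₂]
    · rintro ⟨h1, h2⟩
      obtain ⟨z1, z2⟩ := z
      simp only at h1 h2
      have hv0 : z1.rep 0 ≠ 0 := left_ne_zero_of_mul h1
      have hv1 : z1.rep 1 ≠ 0 := right_ne_zero_of_mul h1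
      obtain ⟨a₁, ha₁sq⟩ := IsAlgClosed.exists_pow_nat_eq (z1.rep 0 / z1.rep 1) (n := 2)
        (by norm_num)
      have ha₁ : a₁ ≠ 0 := by
        intro h
        rw [h] at ha₁sq
        exact div_ne_zero hv0 hv1 (by simpa using ha₁sq.symm)
      have ha₁sq' : a₁ ^ 2 * z1.rep 1 = z1.rep 0 := by
        rw [ha₁sq]; field_simp
      have hdA : (!![a₁^2, 0; 0, 1] : Matrix (Fin 2) (Fin 2) ℂ).det ≠ 0 := by
        simp [Matrix.det_fin_two_of, ha₁]
      have hdB : (!![1, 0, z2.rep 0; 0, a₁, z2.rep 1; 0, 0, z2.rep 2] :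
          Matrix (Fin 3) (Fin 3) ℂ).det ≠ 0 := by
        simp [Matrix.det_fin_three, Matrix.vecHead, Matrix.vecTail, ha₁, h2]
      refine ⟨glOf _ hdA, glOf _ hdB,
        good_image_eq ⟨a₁, z2.rep 2, z2.rep 0, z2.rep 1, 1, 1, ha₁, h2, one_ne_zero, one_ne_zero,
          Or.inl ⟨by simp, by simp⟩⟩, ?_⟩
      show (matAct _ (Projectivization.mk ℂ ![1,1] _), matAct _ (Projectivization.mk ℂ ![0,0,1] _))
        = _
      rw [matAct_mk, matAct_mk]
      refine Prod.ext ?_ ?_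
      · show _ = z1
        conv_rhs => rw [← Projectivization.mk_rep z1]
        rw [Projectivization.mk_eq_mk_iff']
        refine ⟨(z1.rep 1)⁻¹, ?_⟩
        funext i
        fin_cases i <;>
          simp [mulVec2, Matrix.vecHead, Matrix.vecTail] <;>
          field_simp
        linear_combination -ha₁sq'
      · show _ = z2
        conv_rhs => rw [← Projectivization.mk_rep z2]
        rw [Projectivization.mk_eq_mk_iff']
        refine ⟨1, ?_⟩
        funext i
        fin_cases i <;>
          simp [mulVec3, Matrix.vecHead, Matrix.vecTail]
end
end

section
/- Fix an integer g ≥ 2. Define, for b ∈ ℂ, a map T_b: ℂ^{2g+2} → ℂ^{2g+2} on coordinates (p̃₀,…,p̃_g, q̃₀,…,q̃_g) by p̃'_i = Σ_{k=i}^{g} binom(k,i) b^{k−i} p̃_k for 0 ≤ i ≤ g, and q̃'_j = Σ_{l=j}^{g} binom(l,j) b^{l−j} q̃_l + binom(g+1,j) b^{g+1−j} for 0 ≤ j ≤ g. Then b ↦ T_b is an action of the additive group (ℂ, +) on ℂ^{2g+2}; in this action q̃'_g = q̃_g + (g+1)b, so the stabilizer of every point is trivial, and every orbit meets the hyperplane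 {q̃_g = 0} in exactly one point. Consequently the quotient of ℂ^{2g+2} by this action is birationally identified with the affine space {q̃_g = 0} ≅ ℂ^{2g+1}. -/
/-!
Statement 19 (Step 2 of the proof of rationality): the additive group action
`b ↦ T_b` on `ℂ^{2g+2}` (coordinates `(p̃₀,…,p̃_g, q̃₀,…,q̃_g)`) given by
`p̃'_i = Σ_{k=i}^{g} C(k,i) b^{k−i} p̃_k` and
`q̃'_j = Σ_{l=j}^{g} C(l,j) b^{l−j} q̃_l + C(g+1,j) b^{g+1−j}`
is an action of `(ℂ, +)`; `q̃'_g = q̃_g + (g+1)b`, so all stabilizers are trivial and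
every orbit meets `{q̃_g = 0}` in exactly one point; hence the orbit space is in
bijection with `{q̃_g = 0} ≅ ℂ^{2g+1}`.
-/

noncomputable section
open Finset

/-- The coordinate space `ℂ^{2g+2} = (p̃₀,…,p̃_g) × (q̃₀,…,q̃_g)`. -/
abbrev CoordSpace (g : ℕ) : Type := (Fin (g + 1) → ℂ) × (Fin (g + 1) → ℂ)

/-- The map `T_b : ℂ^{2g+2} → ℂ^{2g+2}`,
`p̃'_i = Σ_{k=i}^{g} C(k,i) b^{k−i} p̃_k`,
`q̃'_j = Σ_{l=j}^{g} C(l,j) b^{l−j} q̃_l + C(g+1,j) b^{g+1−j}`. -/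
def Tb (g : ℕ) (b : ℂ) (v : CoordSpace g) : CoordSpace g :=
  (fun i => ∑ k : Fin (g + 1), if (i : ℕ) ≤ (k : ℕ) then
      ((k : ℕ).choose (i : ℕ) : ℂ) * b ^ ((k : ℕ) - (i : ℕ)) * v.1 k else 0,
   fun j => (∑ l : Fin (g + 1), if (j : ℕ) ≤ (l : ℕ) then
      ((l : ℕ).choose (j : ℕ) : ℂ) * b ^ ((l : ℕ) - (j : ℕ)) * v.2 l else 0)
    + ((g + 1).choose (j : ℕ) : ℂ) * b ^ (g + 1 - (j : ℕ)))

/-- Two points of `ℂ^{2g+2}` lie in the same orbit of the `(ℂ,+)`-action `T`. -/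
def TbOrbitRel (g : ℕ) (v w : CoordSpace g) : Prop := ∃ b : ℂ, Tb g b v = w

/-- The elementary coefficient `F b i k = [i ≤ k] C(k,i) b^(k-i)`. -/
def Fc (b : ℂ) (i k : ℕ) : ℂ := if i ≤ k then (k.choose i : ℂ) * b ^ (k - i) else 0

lemma vand (i l : ℕ) (hil : i ≤ l) (b c : ℂ) :
    ∑ k ∈ Icc i l, ((k.choose i : ℂ) * b ^ (k - i)) * ((l.choose k : ℂ) * c ^ (l - k))
      = (l.choose i : ℂ) * (b + c) ^ (l - i) := by
  rw [add_pow, Finset.mul_sum]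
  apply Finset.sum_nbij' (fun k => k - i) (fun m => i + m)
  · intro k hk; simp only [mem_Icc] at hk; simp only [mem_range]; omega
  · intro m hm; simp only [mem_range] at hm; simp only [mem_Icc]; omega
  · intro k hk; simp only [mem_Icc] at hk; omega
  · intro m hm; simp only [mem_range] at hm; omega
  · intro k hk
    simp only [mem_Icc] at hk
    have h1 : (l.choose k : ℂ) * (k.choose i : ℂ)
        = (l.choose i : ℂ) * ((l - i).choose (k - i) : ℂ) := by
      have := Nat.choose_mul (n := l) hk.1
      exact_mod_cast congrArg (Nat.cast (R := ℂ)) this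
    rw [show l - i - (k - i) = l - k by omega]
    linear_combination (b ^ (k - i) * c ^ (l - k)) * h1

lemma keyF (n i l : ℕ) (hl : l < n) (b c : ℂ) :
    ∑ k ∈ range n, Fc b i k * Fc c k l = Fc (b + c) i l := by
  unfold Fc
  by_cases hil : i ≤ l
  · rw [if_pos hil, ← vand i l hil b c]
    rw [← Finset.sum_subset (show Icc i l ⊆ range n by
        intro k hk; simp only [mem_Icc] at hk; simp only [mem_range]; omega)]
    · apply Finset.sum_congr rfl
      intro k hk
      simp only [mem_Icc] at hk
      rw [if_pos hk.1, if_pos hk.2]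
    · intro k _ hk
      simp only [mem_Icc, not_and_or, not_le] at hk
      rcases hk with h | h
      · rw [if_neg (by omega)]; ring
      · rw [if_neg (show ¬ k ≤ l by omega)]; ring
  · rw [if_neg hil]
    apply Finset.sum_eq_zero
    intro k _
    by_cases h : i ≤ k
    · rw [if_neg (show ¬ k ≤ l by omega)]; ring
    · rw [if_neg h]; ring

lemma Tb_fst (g : ℕ) (b : ℂ) (v : CoordSpace g) (i : Fin (g + 1)) :
    (Tb g b v).1 i = ∑ k : Fin (g + 1), Fc b i k * v.1 k := by
  unfold Tb
  dsimp only
  apply Finset.sum_congr rfl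
  intro k _
  unfold Fc
  split <;> simp

lemma Tb_snd (g : ℕ) (b : ℂ) (v : CoordSpace g) (j : Fin (g + 1)) :
    (Tb g b v).2 j = (∑ l : Fin (g + 1), Fc b j l * v.2 l) + Fc b j (g + 1) := by
  unfold Tb
  dsimp only
  congr 1
  · apply Finset.sum_congr rfl
    intro l _
    unfold Fc
    split <;> simp
  · unfold Fc
    rw [if_pos (by omega : (j : ℕ) ≤ g + 1)]

lemma Fc_zero (i k : ℕ) : Fc 0 i k = if i = k then 1 else 0 := by
  unfold Fc
  rcases Nat.lt_trichotomy i k with h | h | h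
  · rw [if_pos (by omega), if_neg (by omega), zero_pow (by omega), mul_zero]
  · subst h; simp
  · rw [if_neg (by omega), if_neg (by omega)]

lemma Tb_zero (g : ℕ) : Tb g 0 = id := by
  funext v
  refine Prod.ext ?_ ?_ <;> funext i
  · rw [show (id v).1 i = v.1 i from rfl, Tb_fst]
    rw [Finset.sum_eq_single i]
    · rw [Fc_zero, if_pos rfl, one_mul]
    · intro k _ hk
      rw [Fc_zero, if_neg (fun h => hk (Fin.ext h.symm)), zero_mul]
    · intro h; exact absurd (mem_univ i) h
  · rw [show (id v).2 i = v.2 i from rfl, Tb_snd]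
    rw [Fc_zero, if_neg (by omega : ¬ (i : ℕ) = g + 1), add_zero]
    rw [Finset.sum_eq_single i]
    · rw [Fc_zero, if_pos rfl, one_mul]
    · intro k _ hk
      rw [Fc_zero, if_neg (fun h => hk (Fin.ext h.symm)), zero_mul]
    · intro h; exact absurd (mem_univ i) h

lemma fin_sum_Fc (b c : ℂ) (g i l : ℕ) (hl : l < g + 1) :
    ∑ k : Fin (g + 1), Fc b i k * Fc c k l = Fc (b + c) i l := by
  rw [← keyF (g + 1) i l hl b c]
  exact Fin.sum_univ_eq_sum_range (fun k => Fc b i k * Fc c k l) (g + 1)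

lemma Tb_comp (g : ℕ) (b c : ℂ) (v : CoordSpace g) :
    Tb g b (Tb g c v) = Tb g (b + c) v := by
  refine Prod.ext ?_ ?_ <;> funext i
  · rw [Tb_fst, Tb_fst]
    simp only [Tb_fst]
    calc ∑ k : Fin (g+1), Fc b i k * ∑ l : Fin (g+1), Fc c k l * v.1 l
        = ∑ k : Fin (g+1), ∑ l : Fin (g+1), (Fc b i k * Fc c k l) * v.1 l := by
          apply Finset.sum_congr rfl; intro k _; rw [Finset.mul_sum]
          apply Finset.sum_congr rfl; intro l _; ring
      _ = ∑ l : Fin (g+1), (∑ k : Fin (g+1), Fc b i k * Fc c k l) * v.1 l := by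
          rw [Finset.sum_comm]
          apply Finset.sum_congr rfl; intro l _; rw [Finset.sum_mul]
      _ = ∑ l : Fin (g+1), Fc (b + c) i l * v.1 l := by
          apply Finset.sum_congr rfl; intro l _
          rw [fin_sum_Fc b c g i l l.isLt]
  · simp only [Tb_snd]
    have h1 : ∑ l : Fin (g+1), Fc b i l *
        ((∑ m : Fin (g+1), Fc c l m * v.2 m) + Fc c l (g+1))
        = (∑ l : Fin (g+1), ∑ m : Fin (g+1), (Fc b i l * Fc c l m) * v.2 m)
          + ∑ l : Fin (g+1), Fc b i l * Fc c l (g+1) := by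
      rw [← Finset.sum_add_distrib]
      apply Finset.sum_congr rfl; intro l _
      rw [mul_add, Finset.mul_sum]
      congr 1
      apply Finset.sum_congr rfl; intro m _; ring
    rw [h1]
    have h2 : (∑ l : Fin (g+1), ∑ m : Fin (g+1), (Fc b i l * Fc c l m) * v.2 m)
        = ∑ m : Fin (g+1), Fc (b + c) i m * v.2 m := by
      rw [Finset.sum_comm]
      apply Finset.sum_congr rfl; intro m _
      rw [← Finset.sum_mul, fin_sum_Fc b c g i m m.isLt]
    rw [h2]
    have h3 : (∑ l : Fin (g+1), Fc b i l * Fc c l (g+1)) + Fc b i (g+1)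
        = Fc (b + c) i (g+1) := by
      have hlast : Fc b i (g+1) = Fc b i (g+1) * Fc c (g+1) (g+1) := by
        unfold Fc
        rw [if_pos le_rfl, Nat.choose_self, Nat.sub_self]
        simp
      rw [hlast, show (∑ l : Fin (g+1), Fc b i l * Fc c l (g+1))
            = ∑ l ∈ range (g+1), Fc b i l * Fc c l (g+1) from
          Fin.sum_univ_eq_sum_range (fun l => Fc b i l * Fc c l (g+1)) (g+1),
        ← Finset.sum_range_succ (fun l => Fc b i l * Fc c l (g+1)) (g+1)]
      exact keyF (g + 2) i (g + 1) (by omega) b c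
    rw [add_assoc, ← h3]

lemma Tb_last (g : ℕ) (b : ℂ) (v : CoordSpace g) :
    (Tb g b v).2 (Fin.last g) = v.2 (Fin.last g) + ((g : ℂ) + 1) * b := by
  rw [Tb_snd]
  simp only [Fin.val_last]
  have h1 : (∑ l : Fin (g+1), Fc b g (l : ℕ) * v.2 l) = v.2 (Fin.last g) := by
    rw [Finset.sum_eq_single (Fin.last g)]
    · unfold Fc
      simp [Fin.val_last]
    · intro l _ hl
      have hv : (l : ℕ) ≠ g := fun h => hl (Fin.ext (by rw [h, Fin.val_last]))
      have hlt : (l : ℕ) < g + 1 := l.isLt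
      unfold Fc
      rw [if_neg (by omega), zero_mul]
    · intro h; exact absurd (mem_univ _) h
  have h2 : Fc b g (g + 1) = ((g : ℂ) + 1) * b := by
    unfold Fc
    rw [if_pos (by omega),
      Nat.choose_succ_self_right, show g + 1 - g = 1 by omega, pow_one]
    push_cast; ring
  rw [h1, h2]

lemma gp1_ne (g : ℕ) : (g : ℂ) + 1 ≠ 0 := by
  have : ((g + 1 : ℕ) : ℂ) ≠ 0 := Nat.cast_ne_zero.mpr (by omega)
  push_cast at this; exact this

/-- The normalization of a point: the unique point in its orbit with `q̃_g = 0`. -/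
def normPt (g : ℕ) (v : CoordSpace g) : CoordSpace g :=
  Tb g (-(v.2 (Fin.last g)) / ((g : ℂ) + 1)) v

lemma normPt_last (g : ℕ) (v : CoordSpace g) :
    (normPt g v).2 (Fin.last g) = 0 := by
  rw [normPt, Tb_last, mul_div_cancel₀ _ (gp1_ne g)]
  ring

lemma normPt_Tb (g : ℕ) (c : ℂ) (v : CoordSpace g) :
    normPt g (Tb g c v) = normPt g v := by
  rw [normPt, Tb_comp, Tb_last, normPt]
  congr 1
  field_simp [gp1_ne g]
  ring

lemma normPt_fixed (g : ℕ) (w : CoordSpace g) (hw : w.2 (Fin.last g) = 0) :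
    normPt g w = w := by
  rw [normPt, hw]
  simp [Tb_zero]

/-- `b ↦ T_b` is an action of the additive group `(ℂ,+)` on
`ℂ^{2g+2}`; in this action `q̃'_g = q̃_g + (g+1)b`, so the stabilizer of every point
is trivial and every orbit meets the hyperplane `{q̃_g = 0}` in exactly one point;
consequently the quotient of `ℂ^{2g+2}` by this action is (birationally) identified
with the affine space `{q̃_g = 0} ≅ ℂ^{2g+1}`. -/
theorem additive_action_and_quotient (g : ℕ) (hg : 2 ≤ g) :
    -- b ↦ T_b is an action of (ℂ, +):
    (Tb g 0 = id) ∧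
    (∀ b c : ℂ, ∀ v : CoordSpace g, Tb g b (Tb g c v) = Tb g (b + c) v) ∧
    -- the last coordinate transforms by q̃'_g = q̃_g + (g+1)b:
    (∀ b : ℂ, ∀ v : CoordSpace g,
      (Tb g b v).2 (Fin.last g) = v.2 (Fin.last g) + (g + 1) * b) ∧
    -- the stabilizer of every point is trivial:
    (∀ b : ℂ, ∀ v : CoordSpace g, Tb g b v = v → b = 0) ∧
    -- every orbit meets the hyperplane {q̃_g = 0} in exactly one point:
    (∀ v : CoordSpace g, ∃! w : CoordSpace g,
      TbOrbitRel g v w ∧ w.2 (Fin.last g) = 0) ∧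
    -- hence the orbit space is in bijection with {q̃_g = 0} ≅ ℂ^{2g+1}:
    Nonempty (Quot (TbOrbitRel g) ≃ (Fin (2 * g + 1) → ℂ)) := by
  refine ⟨Tb_zero g, Tb_comp g, Tb_last g, ?_, ?_, ?_⟩
  · intro b v h
    have hthis := Tb_last g b v
    rw [h] at hthis
    have h2 : ((g : ℂ) + 1) * b = 0 := (left_eq_add.mp hthis)
    exact (mul_eq_zero.mp h2).resolve_left (gp1_ne g)
  · intro v
    refine ⟨normPt g v, ⟨⟨_, rfl⟩, normPt_last g v⟩, ?_⟩
    rintro w ⟨⟨b, rfl⟩, hw⟩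
    rw [← normPt_fixed g (Tb g b v) hw, normPt_Tb]
  · -- the equivalence
    have E1 : Quot (TbOrbitRel g) ≃ {w : CoordSpace g // w.2 (Fin.last g) = 0} :=
      { toFun := Quot.lift (fun v => ⟨normPt g v, normPt_last g v⟩)
          (by rintro v w ⟨c, rfl⟩
              exact Subtype.ext (normPt_Tb g c v).symm)
        invFun := fun w => Quot.mk _ w.1
        left_inv := by
          refine Quot.ind fun v => ?_
          exact (Quot.sound ⟨_, rfl⟩).symm
        right_inv := fun w => Subtype.ext (normPt_fixed g w.1 w.2) }
    have E2 : {w : CoordSpace g // w.2 (Fin.last g) = 0}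
        ≃ (Fin (g + 1) → ℂ) × {f : Fin (g + 1) → ℂ // f (Fin.last g) = 0} :=
      { toFun := fun w => (w.1.1, ⟨w.1.2, w.2⟩)
        invFun := fun x => ⟨(x.1, x.2.1), x.2.2⟩
        left_inv := fun w => rfl
        right_inv := fun x => rfl }
    have E3 : {f : Fin (g + 1) → ℂ // f (Fin.last g) = 0} ≃ (Fin g → ℂ) :=
      { toFun := fun f => Fin.init f.1
        invFun := fun h => ⟨Fin.snoc h 0, by simp⟩
        left_inv := by
          rintro ⟨f, hf⟩
          apply Subtype.ext
          simp only
          rw [← hf, Fin.snoc_init_self]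
        right_inv := fun h => by
          funext i
          simp [Fin.init_snoc] }
    have E4 : (Fin (g + 1) → ℂ) × (Fin g → ℂ) ≃ (Fin (2 * g + 1) → ℂ) :=
      ((Equiv.sumArrowEquivProdArrow _ _ _).symm.trans
        (Equiv.arrowCongr finSumFinEquiv (Equiv.refl ℂ))).trans
        (Equiv.arrowCongr (finCongr (by omega)) (Equiv.refl ℂ))
    exact ⟨E1.trans ((E2.trans ((Equiv.refl _).prodCongr E3)).trans E4)⟩
end
end
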